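/- Let p ∈ [2, ∞), n ∈ ℕ, and let (x_i, y_i)_{i=1}^n be any points in ℝ^d × ℝ. Then for all w, w₀ ∈ ℝ^d: (1/n) Σ_{i=1}^n [ℓ_p(⟨w, x_i⟩ − y_i) − ℓ_p(⟨w₀, x_i⟩ − y_i)] ≥ (1/(8(p−1))) · (1/n) Σ_{i=1}^n |⟨w₀, x_i⟩ − y_i|^{p−2} ⟨w − w₀, x_i⟩² + ⟨(1/n) Σ_{i=1}^n ℓ_p'(⟨w₀, x_i⟩ − y_i) x_i, w − w₀⟩. -/

import Mathlib

open Finset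

-- strong one-variable bound for t ≥ 0
lemma core_nonneg (p t : ℝ) (hp : 2 ≤ p) (ht : 0 ≤ t) :
    1 + p * (t - 1) + (p - 1) * (t - 1) ^ 2 ≤ t ^ p := by
  rcases eq_or_lt_of_le ht with h0 | h0
  · rw [← h0, Real.zero_rpow (by positivity)]
    nlinarith
  · have hb : 1 + (p - 1) * (t - 1) ≤ t ^ (p - 1) := by
      have := one_add_mul_self_le_rpow_one_add (s := t - 1) (by linarith) (p := p - 1) (by linarith)
      simpa using this
    have hmul : t * (1 + (p - 1) * (t - 1)) ≤ t * t ^ (p - 1) :=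
      mul_le_mul_of_nonneg_left hb ht
    have hpow : t * t ^ (p - 1) = t ^ p := by
      rw [← Real.rpow_one_add' (le_of_lt h0) (by linarith : 1 + (p-1) ≠ 0)]
      ring_nf
    nlinarith [hmul, hpow]

-- core: for all t
lemma core (p t : ℝ) (hp : 2 ≤ p) :
    1 + p * (t - 1) + (p / 8) * (t - 1) ^ 2 ≤ |t| ^ p := by
  rcases le_or_gt 0 t with ht | ht
  · rw [abs_of_nonneg ht]
    nlinarith [core_nonneg p t hp ht, sq_nonneg (t - 1)]
  · rw [abs_of_neg ht]
    have h := core_nonneg p (-t) hp (by linarith)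
    nlinarith [sq_nonneg (-t - 1), h, sq_nonneg t]

lemma main_pos (p a b : ℝ) (hp : 2 ≤ p) (ha : 0 < a) :
    a ^ p + p * (a ^ p / a) * (b - a) + (p / 8) * (a ^ p / a / a) * (b - a) ^ 2 ≤ |b| ^ p := by
  have hA : 0 < a ^ p := Real.rpow_pos_of_pos ha p
  have hcore := core p (b / a) hp
  have hmul := mul_le_mul_of_nonneg_left hcore hA.le
  have hbp : a ^ p * |b / a| ^ p = |b| ^ p := by
    rw [abs_div, abs_of_pos ha, Real.div_rpow (abs_nonneg b) ha.le,
      mul_div_cancel₀ _ (ne_of_gt hA)]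
  have heq : a ^ p * (1 + p * (b / a - 1) + p / 8 * (b / a - 1) ^ 2) =
      a ^ p + p * (a ^ p / a) * (b - a) + (p / 8) * (a ^ p / a / a) * (b - a) ^ 2 := by
    field_simp
  rw [hbp] at hmul
  linarith [hmul, heq ▸ hmul]

lemma main_scalar (p a b : ℝ) (hp : 2 ≤ p) :
    |a| ^ p + p * Real.sign a * |a| ^ (p - 1) * (b - a) +
      (p / 8) * |a| ^ (p - 2) * (b - a) ^ 2 ≤ |b| ^ p := by
  rcases lt_trichotomy a 0 with ha | ha | ha
  · -- a < 0
    have hc : (0:ℝ) < -a := by linarith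
    rw [Real.sign_of_neg ha, abs_of_neg ha]
    have e1 : (-a) ^ (p - 1) = (-a) ^ p / (-a) := Real.rpow_sub_one (ne_of_gt hc) p
    have e2 : (-a) ^ (p - 2) = (-a) ^ p / (-a) / (-a) := by
      rw [show p - 2 = p - 1 - 1 by ring, Real.rpow_sub_one (ne_of_gt hc), e1]
    rw [e1, e2]
    have h := main_pos p (-a) (-b) hp hc
    rw [abs_neg] at h
    calc (-a) ^ p + p * (-1) * ((-a) ^ p / (-a)) * (b - a) +
          p / 8 * ((-a) ^ p / (-a) / (-a)) * (b - a) ^ 2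
        = (-a) ^ p + p * ((-a) ^ p / (-a)) * (-b - -a) +
          p / 8 * ((-a) ^ p / (-a) / (-a)) * (-b - -a) ^ 2 := by ring
      _ ≤ |b| ^ p := h
  · -- a = 0
    subst ha
    rw [Real.sign_zero, abs_zero, Real.zero_rpow (by positivity : p ≠ 0)]
    rcases eq_or_lt_of_le hp with h2 | h2
    · rw [← h2]
      norm_num
      nlinarith [sq_nonneg b]
    · rw [Real.zero_rpow (by linarith : p - 2 ≠ 0)]
      simpa using Real.rpow_nonneg (abs_nonneg b) p
  · -- a > 0
    rw [Real.sign_of_pos ha, abs_of_pos ha]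
    have e1 : a ^ (p - 1) = a ^ p / a := Real.rpow_sub_one (ne_of_gt ha) p
    have e2 : a ^ (p - 2) = a ^ p / a / a := by
      rw [show p - 2 = p - 1 - 1 by ring, Real.rpow_sub_one (ne_of_gt ha), e1]
    rw [e1, e2]
    have h := main_pos p a b hp ha
    calc a ^ p + p * 1 * (a ^ p / a) * (b - a) + p / 8 * (a ^ p / a / a) * (b - a) ^ 2
        = a ^ p + p * (a ^ p / a) * (b - a) + p / 8 * (a ^ p / a / a) * (b - a) ^ 2 := by ring
      _ ≤ |b| ^ p := h

lemma scalar_div (p a b : ℝ) (hp : 2 ≤ p) :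
    (1 / (8 * (p - 1))) * (|a| ^ (p - 2) * (b - a) ^ 2) +
      (Real.sign a * |a| ^ (p - 1) / (p - 1)) * (b - a)
    ≤ |b| ^ p / (p * (p - 1)) - |a| ^ p / (p * (p - 1)) := by
  have hpp : 0 < p * (p - 1) := by nlinarith
  have h := main_scalar p a b hp
  generalize hX : |a| ^ (p - 2) = X at *
  generalize hY : |a| ^ (p - 1) = Y at *
  generalize hZ : |a| ^ p = Z at *
  generalize hW : |b| ^ p = W at *
  generalize hS : Real.sign a = S at *
  have hne : p - 1 ≠ 0 := by linarith
  have hpne : p ≠ 0 := by linarith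
  have key : (1 / (8 * (p - 1))) * (X * (b - a) ^ 2) + (S * Y / (p - 1)) * (b - a)
      = ((Z + p * S * Y * (b - a) + (p / 8) * X * (b - a) ^ 2) - Z) / (p * (p - 1)) := by
    field_simp
    ring
  have h2 : ((Z + p * S * Y * (b - a) + (p / 8) * X * (b - a) ^ 2) - Z) / (p * (p - 1))
      ≤ (W - Z) / (p * (p - 1)) := by
    exact (div_le_div_iff_of_pos_right hpp).mpr (by linarith)
  simp only [sub_div] at key h2
  linarith [key, h2]

/-- pointwise lower bound on the excess empirical risk for `p ∈ [2, ∞)`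
(inequality `eq:lowerboundpgeq2` of Lemma `lem:boundsgeq2`). -/
theorem empirical_excess_risk_lower_bound_p_ge_two
    (p : ℝ) (hp : 2 ≤ p) {d n : ℕ}
    (x : Fin n → Fin d → ℝ) (y : Fin n → ℝ)
    (w w₀ : Fin d → ℝ) :
    (1 / n : ℝ) * ∑ i, (|∑ j, w j * x i j - y i| ^ p / (p * (p - 1)) -
        |∑ j, w₀ j * x i j - y i| ^ p / (p * (p - 1))) ≥
      (1 / (8 * (p - 1))) *
        ((1 / n : ℝ) * ∑ i, |∑ j, w₀ j * x i j - y i| ^ (p - 2) *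
          (∑ j, (w j - w₀ j) * x i j) ^ 2) +
      ∑ j, ((1 / n : ℝ) * ∑ i, (Real.sign (∑ j', w₀ j' * x i j' - y i) *
          |∑ j', w₀ j' * x i j' - y i| ^ (p - 1) / (p - 1)) * x i j) * (w j - w₀ j) := by
  set A : Fin n → ℝ := fun i => ∑ j, w₀ j * x i j - y i with hA
  set B : Fin n → ℝ := fun i => ∑ j, w j * x i j - y i with hB
  set g : Fin n → ℝ := fun i => Real.sign (A i) * |A i| ^ (p - 1) / (p - 1) with hg
  set c : ℝ := (1 / n : ℝ) with hc
  have hc0 : 0 ≤ c := by positivity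
  have hH : ∀ i, ∑ j, (w j - w₀ j) * x i j = B i - A i := by
    intro i
    simp only [hA, hB, sub_mul, Finset.sum_sub_distrib]
    ring
  have grad : ∑ j, (c * ∑ i, g i * x i j) * (w j - w₀ j)
      = c * ∑ i, g i * (B i - A i) := by
    calc ∑ j, (c * ∑ i, g i * x i j) * (w j - w₀ j)
        = ∑ j, ∑ i, c * (g i * ((w j - w₀ j) * x i j)) := by
          refine Finset.sum_congr rfl fun j _ => ?_
          rw [Finset.mul_sum, Finset.sum_mul]
          exact Finset.sum_congr rfl fun i _ => by ring
      _ = ∑ i, ∑ j, c * (g i * ((w j - w₀ j) * x i j)) := Finset.sum_comm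
      _ = c * ∑ i, g i * (B i - A i) := by
          rw [Finset.mul_sum]
          refine Finset.sum_congr rfl fun i _ => ?_
          rw [← hH i, Finset.mul_sum, Finset.mul_sum]
  rw [grad]
  have hsq : ∀ i, |A i| ^ (p - 2) * (∑ j, (w j - w₀ j) * x i j) ^ 2
      = |A i| ^ (p - 2) * (B i - A i) ^ 2 := fun i => by rw [hH i]
  simp only [hH]
  calc (1 / (8 * (p - 1))) * (c * ∑ i, |A i| ^ (p - 2) * (B i - A i) ^ 2) +
        c * ∑ i, g i * (B i - A i)
      = c * ∑ i, ((1 / (8 * (p - 1))) * (|A i| ^ (p - 2) * (B i - A i) ^ 2) +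
          g i * (B i - A i)) := by
        simp only [Finset.sum_add_distrib, mul_add, Finset.mul_sum]
        congr 1
        exact Finset.sum_congr rfl fun i _ => by ring
    _ ≤ c * ∑ i, (|B i| ^ p / (p * (p - 1)) - |A i| ^ p / (p * (p - 1))) := by
        refine mul_le_mul_of_nonneg_left (Finset.sum_le_sum fun i _ => ?_) hc0
        exact scalar_div p (A i) (B i) hp
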